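/- Given two inclusion chains G (on G_0, length n+1) and H (on H_0, length m+1), an index function f: [n] → [m] with f(0)=0 and j > i ⟹ f(j)−f(i) ≥ j−i, and a family of total graph homomorphisms φ_i: G_i → H_{f(i)}, the following are equivalent: (1) for every n ≥ j > 0 the square with inclusions G_j ↪ G_0, H_{f(j)} ↪ H_0 and maps φ_j, φ_0 is a pullback in the category of graphs; (2) (φ,f) is a closed typing chain morphism, i.e., for all n ≥ j > i ≥ 0 the square with inclusions G_j ∩ G_i ↪ G_i, H_{f(j)} ∩ H_{f(i)} ↪ H_{f(i)} and maps φ_{j|i}, φ_i is a pullback, and likewise the square with inclusions into G_j and H_{f(j)} is a pullback. -/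

import Mathlib

/-- A directed multigraph. -/
structure DGraph where
  N : Type
  A : Type
  src : A → N
  tgt : A → N

/-- A (total) graph homomorphism. -/
structure GraphHom (G H : DGraph) where
  fN : G.N → H.N
  fA : G.A → H.A
  src_comm : ∀ a, H.src (fA a) = fN (G.src a)
  tgt_comm : ∀ a, H.tgt (fA a) = fN (G.tgt a)

/-- A subgraph, given by node and arrow sets closed under source and target. -/
structure Subgraph (G : DGraph) where
  nodes : Set G.N
  arrows : Set G.A
  src_mem : ∀ a ∈ arrows, G.src a ∈ nodes
  tgt_mem : ∀ a ∈ arrows, G.tgt a ∈ nodes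

/-- The graph realizing a subgraph. -/
def Subgraph.toGraph {G : DGraph} (X : Subgraph G) : DGraph where
  N := {x // x ∈ X.nodes}
  A := {a // a ∈ X.arrows}
  src := fun a => ⟨G.src a.1, X.src_mem a.1 a.2⟩
  tgt := fun a => ⟨G.tgt a.1, X.tgt_mem a.1 a.2⟩

/-- Subgraph inclusion order. -/
def Subgraph.le {G : DGraph} (X Y : Subgraph G) : Prop :=
  X.nodes ⊆ Y.nodes ∧ X.arrows ⊆ Y.arrows

/-- Intersection of subgraphs. -/
def Subgraph.inter {G : DGraph} (X Y : Subgraph G) : Subgraph G where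
  nodes := X.nodes ∩ Y.nodes
  arrows := X.arrows ∩ Y.arrows
  src_mem := fun a ha => ⟨X.src_mem a ha.1, Y.src_mem a ha.2⟩
  tgt_mem := fun a ha => ⟨X.tgt_mem a ha.1, Y.tgt_mem a ha.2⟩

/-- The full subgraph. -/
def Subgraph.top (G : DGraph) : Subgraph G :=
  ⟨Set.univ, Set.univ, fun _ _ => trivial, fun _ _ => trivial⟩

/-- A partial graph homomorphism `G ⇀ H`: a subgraph `dom ⊑ G` (the domain of
definition) together with a total graph homomorphism `dom → H`. -/
structure PGraphHom (G H : DGraph) where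
  dom : Subgraph G
  fN : ∀ x, x ∈ dom.nodes → H.N
  fA : ∀ a, a ∈ dom.arrows → H.A
  src_comm : ∀ a (ha : a ∈ dom.arrows),
    H.src (fA a ha) = fN (G.src a) (dom.src_mem a ha)
  tgt_comm : ∀ a (ha : a ∈ dom.arrows),
    H.tgt (fA a ha) = fN (G.tgt a) (dom.tgt_mem a ha)

/-- A partial graph homomorphism is total if its domain of definition is everything. -/
def PGraphHom.Total {G H : DGraph} (φ : PGraphHom G H) : Prop :=
  φ.dom.nodes = Set.univ ∧ φ.dom.arrows = Set.univ

theorem PGraphHom.fN_congr {G H : DGraph} (φ : PGraphHom G H) {x y : G.N}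
    (hx : x ∈ φ.dom.nodes) (hy : y ∈ φ.dom.nodes) (h : x = y) :
    φ.fN x hx = φ.fN y hy := by subst h; rfl

/-- Domain of definition of the composite: the preimage of `dom ψ` under `φ`. -/
def PGraphHom.domComp {G H K : DGraph} (φ : PGraphHom G H) (ψ : PGraphHom H K) :
    Subgraph G where
  nodes := {x | ∃ h : x ∈ φ.dom.nodes, φ.fN x h ∈ ψ.dom.nodes}
  arrows := {a | ∃ h : a ∈ φ.dom.arrows, φ.fA a h ∈ ψ.dom.arrows}
  src_mem := fun a ha => ⟨φ.dom.src_mem a ha.choose, by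
    rw [← φ.src_comm a ha.choose]
    exact ψ.dom.src_mem _ ha.choose_spec⟩
  tgt_mem := fun a ha => ⟨φ.dom.tgt_mem a ha.choose, by
    rw [← φ.tgt_comm a ha.choose]
    exact ψ.dom.tgt_mem _ ha.choose_spec⟩

/-- Composition of partial graph homomorphisms. -/
def PGraphHom.comp {G H K : DGraph} (φ : PGraphHom G H) (ψ : PGraphHom H K) :
    PGraphHom G K where
  dom := φ.domComp ψ
  fN := fun x hx => ψ.fN (φ.fN x hx.choose) hx.choose_spec
  fA := fun a ha => ψ.fA (φ.fA a ha.choose) ha.choose_spec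
  src_comm := fun a ha =>
    (ψ.src_comm _ ha.choose_spec).trans
      (ψ.fN_congr _ _ (φ.src_comm a ha.choose))
  tgt_comm := fun a ha =>
    (ψ.tgt_comm _ ha.choose_spec).trans
      (ψ.fN_congr _ _ (φ.tgt_comm a ha.choose))

/-- The order `φ ⪯ ψ`: `dom φ ⊑ dom ψ` and agreement on `dom φ`. -/
def PGraphHom.le {G H : DGraph} (φ ψ : PGraphHom G H) : Prop :=
  φ.dom.le ψ.dom ∧
  (∀ x (hx : x ∈ φ.dom.nodes) (hx' : x ∈ ψ.dom.nodes), φ.fN x hx = ψ.fN x hx') ∧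
  (∀ a (ha : a ∈ φ.dom.arrows) (ha' : a ∈ ψ.dom.arrows), φ.fA a ha = ψ.fA a ha')

/-- Regarding a total graph homomorphism as a partial one. -/
def GraphHom.toP {G H : DGraph} (f : GraphHom G H) : PGraphHom G H where
  dom := Subgraph.top G
  fN := fun x _ => f.fN x
  fA := fun a _ => f.fA a
  src_comm := fun a _ => f.src_comm a
  tgt_comm := fun a _ => f.tgt_comm a

/-- Composition of total graph homomorphisms. -/
def GraphHom.comp {G H K : DGraph} (f : GraphHom G H) (g : GraphHom H K) :
    GraphHom G K where
  fN := fun x => g.fN (f.fN x)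
  fA := fun a => g.fA (f.fA a)
  src_comm := fun a => (g.src_comm _).trans (congrArg g.fN (f.src_comm a))
  tgt_comm := fun a => (g.tgt_comm _).trans (congrArg g.fN (f.tgt_comm a))

/-- Given inclusion chains `Gs` (on `G0`, length `n+1`) and `Hs`
(on `H0`, length `m+1`), an index function `f` with `f 0 = 0` and
`j > i ⟹ f j − f i ≥ j − i`, and a family of total graph homomorphisms
`φ i : Gs i → Hs (f i)` — encoded by a single homomorphism `φ : G0 → H0`
mapping each `Gs i` into `Hs (f i)` — the following are equivalent:
(1) for every `j > 0`, `Gs j` is the preimage of `Hs (f j)` under `φ = φ 0`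
(the level-0 squares are pullbacks in `Graph`);
(2) `(φ, f)` is a closed typing chain morphism, i.e. for all `j > i` the two
squares with the intersection inclusions `Gs j ∩ Gs i ↪ Gs i`,
`Hs (f j) ∩ Hs (f i) ↪ Hs (f i)` (resp. into `Gs j`, `Hs (f j)`) are pullbacks. -/
theorem level_zero_pullbacks_iff_closed {n m : ℕ} {G0 H0 : DGraph}
    (Gs : Fin (n+1) → Subgraph G0) (Hs : Fin (m+1) → Subgraph H0)
    (hG0 : (Gs 0).nodes = Set.univ ∧ (Gs 0).arrows = Set.univ)
    (hH0 : (Hs 0).nodes = Set.univ ∧ (Hs 0).arrows = Set.univ)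
    (f : Fin (n+1) → Fin (m+1)) (hf0 : f 0 = 0)
    (hf : ∀ i j : Fin (n+1), i < j → (f i : ℕ) + ((j : ℕ) - (i : ℕ)) ≤ (f j : ℕ))
    (φ : GraphHom G0 H0)
    (hmapsN : ∀ i : Fin (n+1), ∀ x ∈ (Gs i).nodes, φ.fN x ∈ (Hs (f i)).nodes)
    (hmapsA : ∀ i : Fin (n+1), ∀ a ∈ (Gs i).arrows, φ.fA a ∈ (Hs (f i)).arrows) :
    (∀ j : Fin (n+1), (0 : Fin (n+1)) < j →
      (Gs j).nodes = φ.fN ⁻¹' (Hs (f j)).nodes ∧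
      (Gs j).arrows = φ.fA ⁻¹' (Hs (f j)).arrows)
    ↔
    (∀ j i : Fin (n+1), i < j →
      ((Gs j).nodes ∩ (Gs i).nodes =
        (Gs i).nodes ∩ (φ.fN ⁻¹' ((Hs (f j)).nodes ∩ (Hs (f i)).nodes)) ∧
       (Gs j).arrows ∩ (Gs i).arrows =
        (Gs i).arrows ∩ (φ.fA ⁻¹' ((Hs (f j)).arrows ∩ (Hs (f i)).arrows)) ∧
       (Gs j).nodes ∩ (Gs i).nodes =
        (Gs j).nodes ∩ (φ.fN ⁻¹' ((Hs (f j)).nodes ∩ (Hs (f i)).nodes)) ∧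
       (Gs j).arrows ∩ (Gs i).arrows =
        (Gs j).arrows ∩ (φ.fA ⁻¹' ((Hs (f j)).arrows ∩ (Hs (f i)).arrows)))) := by
  constructor
  · intro h j i hij
    have key : ∀ k : Fin (n+1), (Gs k).nodes = φ.fN ⁻¹' (Hs (f k)).nodes ∧
        (Gs k).arrows = φ.fA ⁻¹' (Hs (f k)).arrows := by
      intro k
      rcases (Fin.zero_le k).lt_or_eq with hk | hk
      · exact h k hk
      · rw [← hk, hf0, hG0.1, hG0.2, hH0.1, hH0.2]
        constructor <;> · ext x; simp
    obtain ⟨hjN, hjA⟩ := key j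
    obtain ⟨hiN, hiA⟩ := key i
    refine ⟨?_, ?_, ?_, ?_⟩
    · rw [hjN, hiN]; ext x; simp [Set.mem_preimage]; try tauto
    · rw [hjA, hiA]; ext x; simp [Set.mem_preimage]; try tauto
    · rw [hjN, hiN]; ext x; simp [Set.mem_preimage]; try tauto
    · rw [hjA, hiA]; ext x; simp [Set.mem_preimage]; try tauto
  · intro h j hj
    obtain ⟨h1, h2, _, _⟩ := h j 0 hj
    simp only [hf0, hG0.1, hG0.2, hH0.1, hH0.2, Set.inter_univ, Set.univ_inter] at h1 h2
    exact ⟨h1, h2⟩
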